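/- For every n ≥ 2 and every W-path w of order n, the word Φ(w) obtained by applying the transformation table φ to the T_n consecutive pairs of the supplemented word 0·w·0 is an S-path of order n. -/

import Mathlib

/-- The unit vector in direction `d·π/3`, viewing the plane as `ℂ`. -/
noncomputable def dirU (d : Fin 6) : ℂ :=
  Complex.exp ((d : ℕ) * Real.pi / 3 * Complex.I)

/-- The position sequence of a direction word: `p₀ = 0`, `p_{m+1} = p_m + dirU (ds_m)`. -/
noncomputable def posSeq (ds : List (Fin 6)) (m : ℕ) : ℂ :=
  ((ds.take m).map dirU).sum

/-- The grid point `P(i,j) = i·u(0) + j·u(1)`. -/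
noncomputable def Pt (i j : ℕ) : ℂ := (i : ℂ) * dirU 0 + (j : ℂ) * dirU 1

/-- The triangular number `T_n = n(n+1)/2`. -/
def triNum (n : ℕ) : ℕ := n * (n + 1) / 2

/-- The inscribed grid `G_n = {P(i,j) : i + j ≤ n - 1}`. -/
def inscribedGrid (n : ℕ) : Set ℂ := {p | ∃ i j : ℕ, i + j ≤ n - 1 ∧ p = Pt i j}

/-- An H-path of order `n`: a direction word of length `T_n - 1` whose position sequence
is injective with image `G_n`, starting at `P(0,0) = 0` and ending at `P(n-1,0)`. -/
def IsHPath (n : ℕ) (w : List (Fin 6)) : Prop :=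
  w.length = triNum n - 1 ∧
  (Function.Injective fun m : Fin (w.length + 1) => posSeq w m) ∧
  (Set.range fun m : Fin (w.length + 1) => posSeq w m) = inscribedGrid n ∧
  posSeq w 0 = Pt 0 0 ∧
  posSeq w w.length = Pt (n - 1) 0

/-- `(a, b)` is a forbidden turn if `b ≡ a + 4 (mod 6)` with `a` even, or
`b ≡ a + 2 (mod 6)` with `a` odd (addition in `Fin 6` is mod 6). -/
def ForbiddenTurn (a b : Fin 6) : Prop :=
  (Even (a : ℕ) ∧ b = a + 4) ∨ (Odd (a : ℕ) ∧ b = a + 2)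

/-- A W-path of order `n`: an H-path whose supplemented word `0·w·0` contains no
forbidden turn among its consecutive pairs. -/
def IsWPath (n : ℕ) (w : List (Fin 6)) : Prop :=
  IsHPath n w ∧ List.Chain' (fun a b => ¬ ForbiddenTurn a b) ((0 : Fin 6) :: (w ++ [0]))

/-- The `m`-th edge of a direction word: the closed segment `[p_m, p_{m+1}]`. -/
noncomputable def edgeSeg (s : List (Fin 6)) (m : ℕ) : Set ℂ :=
  segment ℝ (posSeq s m) (posSeq s (m + 1))

/-- `e` is a side of the dark (upward) tile `Δ(i,j)`, i.e. one of its three closed edges. -/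
def IsSideOf (e : Set ℂ) (i j : ℕ) : Prop :=
  e = segment ℝ (Pt i j) (Pt (i + 1) j) ∨
  e = segment ℝ (Pt (i + 1) j) (Pt i (j + 1)) ∨
  e = segment ℝ (Pt i j) (Pt i (j + 1))

/-- An S-path of order `n`: a direction word of length `T_n` from `0` to `n·u(0)`,
whose edges are pairwise distinct sides of dark tiles, such that the assignment of
edges to dark tiles is a bijection onto the set of dark tiles (indexed by base points
`(i,j)` with `i + j ≤ n - 1`). -/
def IsSPath (n : ℕ) (s : List (Fin 6)) : Prop :=
  s.length = triNum n ∧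
  posSeq s 0 = 0 ∧
  posSeq s s.length = (n : ℂ) * dirU 0 ∧
  (∀ m m' : Fin s.length, edgeSeg s m = edgeSeg s m' → m = m') ∧
  ∃ t : Fin s.length → {p : ℕ × ℕ // p.1 + p.2 ≤ n - 1},
    (∀ m : Fin s.length, IsSideOf (edgeSeg s (m : ℕ)) (t m).1.1 (t m).1.2) ∧ Function.Bijective t

/-- The partial transformation table `φ` of Table 1. -/
def phiTable (a b : Fin 6) : Option (Fin 6) :=
  if a = 0 ∨ a = 1 then
    if b = 0 then some 0 else if b = 1 then some 1 else if b = 2 then some 1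
    else if b = 5 then some 0 else none
  else if a = 2 ∨ a = 3 then
    if b = 1 then some 2 else if b = 2 then some 2 else if b = 3 then some 3
    else if b = 4 then some 3 else none
  else
    if b = 0 then some 5 else if b = 3 then some 4 else if b = 4 then some 4
    else if b = 5 then some 5 else none

/-- The consecutive pairs of the supplemented word `0·w·0`. -/
def suppPairs (w : List (Fin 6)) : List (Fin 6 × Fin 6) :=
  ((0 : Fin 6) :: (w ++ [0])).zip (w ++ [0])

/-- `Φ(w)`: apply `φ` to the consecutive pairs of the supplemented word `0·w·0`
(using the default value `0` where `φ` is undefined). -/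
def PhiWord (w : List (Fin 6)) : List (Fin 6) :=
  (suppPairs w).map fun p => (phiTable p.1 p.2).getD 0

/-! ### Auxiliary machinery -/

noncomputable def om : ℂ := Complex.exp (Real.pi / 3 * Complex.I)

lemma om_im : om.im = Real.sqrt 3 / 2 := by
  rw [om, Complex.exp_im]
  simp [Complex.div_re, Complex.div_im]

lemma om_im_pos : 0 < om.im := by
  rw [om_im]; positivity

lemma dirU_eq_pow (d : Fin 6) : dirU d = om ^ (d : ℕ) := by
  rw [dirU, om, ← Complex.exp_nat_mul]; ring_nf

lemma om_cube : om ^ 3 = -1 := by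
  rw [om, ← Complex.exp_nat_mul]
  rw [show ((3:ℕ):ℂ) * (Real.pi / 3 * Complex.I) = Real.pi * Complex.I by push_cast; ring]
  exact Complex.exp_pi_mul_I

lemma om_sq : om ^ 2 = om - 1 := by
  have h2 : om ^ 2 - om + 1 = 0 := by
    have hne : om + 1 ≠ 0 := by
      intro h
      have : om.im = 0 := by
        have := congrArg Complex.im h; simpa using this
      nlinarith [om_im_pos]
    have h : (om + 1) * (om ^ 2 - om + 1) = om ^ 3 + 1 := by ring
    rw [om_cube] at h
    simp at h
    exact h.resolve_left hne
  linear_combination h2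

lemma dirU0 : dirU 0 = 1 := by rw [dirU_eq_pow]; norm_num
lemma dirU1 : dirU 1 = om := by rw [dirU_eq_pow]; norm_num
lemma dirU2 : dirU 2 = om - 1 := by rw [dirU_eq_pow]; exact_mod_cast om_sq
lemma dirU3 : dirU 3 = -1 := by rw [dirU_eq_pow]; exact_mod_cast om_cube
lemma dirU4 : dirU 4 = -om := by
  rw [dirU_eq_pow, show ((4:Fin 6):ℕ) = 3 + 1 from rfl, pow_succ, om_cube]; ring
lemma dirU5 : dirU 5 = 1 - om := by
  rw [dirU_eq_pow, show ((5:Fin 6):ℕ) = 3 + 2 from rfl, pow_add, om_cube, om_sq]; ring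

lemma Pt_eq (i j : ℕ) : Pt i j = (i : ℂ) + (j : ℂ) * om := by
  rw [Pt, dirU0, dirU1]; ring

lemma Pt_inj {i j i' j' : ℕ} (h : Pt i j = Pt i' j') : i = i' ∧ j = j' := by
  rw [Pt_eq, Pt_eq] at h
  have him := congrArg Complex.im h
  simp at him
  have hjj : j = j' := him.resolve_right (fun h => absurd h (ne_of_gt om_im_pos))
  subst hjj
  have hre := congrArg Complex.re h
  simp at hre
  exact ⟨by exact_mod_cast hre, rfl⟩

lemma dirU_add3 (c : Fin 6) : dirU (c + 3) = -dirU c := by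
  fin_cases c <;>
    simp [show ((0:Fin 6)+3 : Fin 6) = 3 from rfl, show ((1:Fin 6)+3 : Fin 6) = 4 from rfl,
      show ((2:Fin 6)+3 : Fin 6) = 5 from rfl, show ((3:Fin 6)+3 : Fin 6) = 0 from rfl,
      show ((4:Fin 6)+3 : Fin 6) = 1 from rfl, show ((5:Fin 6)+3 : Fin 6) = 2 from rfl,
      dirU0, dirU1, dirU2, dirU3, dirU4, dirU5]

/-- The auxiliary offset function: `q_m = p_m + fAux a_m`. -/
noncomputable def fAux : Fin 6 → ℂ
  | 0 => 0 | 1 => 0 | 2 => 1 | 3 => 1 | 4 => om | 5 => om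

lemma phi_cases : ∀ a b : Fin 6,
    (phiTable a b).isSome = true ∨ b = a + 3 ∨ ForbiddenTurn a b := by
  unfold ForbiddenTurn
  decide

lemma phi_step (a b : Fin 6) (h : (phiTable a b).isSome = true) :
    dirU ((phiTable a b).getD 0) = dirU b + fAux b - fAux a := by
  fin_cases a <;> fin_cases b <;>
    simp_all [phiTable, fAux, dirU0, dirU1, dirU2, dirU3, dirU4, dirU5] <;> ring

lemma phi_fAux (a b : Fin 6) (h : (phiTable a b).isSome = true) :
    fAux a = fAux ((phiTable a b).getD 0) := by
  fin_cases a <;> fin_cases b <;> simp_all [phiTable, fAux]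

lemma seg_congr {x y x' y' : ℂ} (hx : x = x') (hy : y = y') :
    segment ℝ x y = segment ℝ x' y' := by rw [hx, hy]

lemma sideA (i j : ℕ) : IsSideOf (segment ℝ (Pt i j + fAux 0) (Pt i j + fAux 0 + dirU 0)) i j := by
  left; apply seg_congr <;> simp only [Pt_eq, fAux, dirU0] <;> push_cast <;> ring
lemma sideB (i j : ℕ) : IsSideOf (segment ℝ (Pt i j + fAux 1) (Pt i j + fAux 1 + dirU 1)) i j := by
  right; right; apply seg_congr <;> simp only [Pt_eq, fAux, dirU1] <;> push_cast <;> ring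
lemma sideC (i j : ℕ) : IsSideOf (segment ℝ (Pt i j + fAux 2) (Pt i j + fAux 2 + dirU 2)) i j := by
  right; left; apply seg_congr <;> simp only [Pt_eq, fAux, dirU2] <;> push_cast <;> ring
lemma sideD (i j : ℕ) : IsSideOf (segment ℝ (Pt i j + fAux 3) (Pt i j + fAux 3 + dirU 3)) i j := by
  left; rw [segment_symm]; apply seg_congr <;> simp only [Pt_eq, fAux, dirU3] <;> push_cast <;> ring
lemma sideE (i j : ℕ) : IsSideOf (segment ℝ (Pt i j + fAux 4) (Pt i j + fAux 4 + dirU 4)) i j := by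
  right; right; rw [segment_symm]; apply seg_congr <;> simp only [Pt_eq, fAux, dirU4] <;> push_cast <;> ring
lemma sideF (i j : ℕ) : IsSideOf (segment ℝ (Pt i j + fAux 5) (Pt i j + fAux 5 + dirU 5)) i j := by
  right; left; rw [segment_symm]; apply seg_congr <;> simp only [Pt_eq, fAux, dirU5] <;> push_cast <;> ring

lemma side_all (c : Fin 6) (i j : ℕ) :
    IsSideOf (segment ℝ (Pt i j + fAux c) (Pt i j + fAux c + dirU c)) i j := by
  fin_cases c
  · exact sideA i j
  · exact sideB i j
  · exact sideC i j
  · exact sideD i j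
  · exact sideE i j
  · exact sideF i j

lemma phi_side (a b : Fin 6) (h : (phiTable a b).isSome = true) (i j : ℕ) :
    IsSideOf (segment ℝ (Pt i j + fAux a) (Pt i j + fAux a + dirU ((phiTable a b).getD 0))) i j := by
  rw [phi_fAux a b h]
  exact side_all _ i j

lemma scalar_cases {s t u v : ℝ} (hs : s ∈ Set.Icc (0:ℝ) 1) (ht : t ∈ Set.Icc (0:ℝ) 1)
    (hu : u ∈ Set.Icc (0:ℝ) 1) (hv : v ∈ Set.Icc (0:ℝ) 1)
    (r1 : s + u * (t - s) = 0) (r2 : s + v * (t - s) = 1) :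
    (s = 0 ∧ t = 1) ∨ (s = 1 ∧ t = 0) := by
  obtain ⟨hs0, hs1⟩ := hs; obtain ⟨ht0, ht1⟩ := ht
  obtain ⟨hu0, hu1⟩ := hu; obtain ⟨hv0, hv1⟩ := hv
  rcases le_or_gt s t with hst | hst
  · have hs' : s = 0 := by nlinarith
    subst hs'
    have ht' : t = 1 := by nlinarith
    exact Or.inl ⟨rfl, ht'⟩
  · have ht' : t = 0 := by nlinarith
    subst ht'
    have hs' : s = 1 := by nlinarith
    exact Or.inr ⟨hs', rfl⟩

lemma seg_eq {x y x' y' : ℂ} (hxy : x ≠ y) (h : segment ℝ x y = segment ℝ x' y') :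
    (x = x' ∧ y = y') ∨ (x = y' ∧ y = x') := by
  have hx' : x' ∈ segment ℝ x y := by rw [h]; exact left_mem_segment ℝ x' y'
  have hy' : y' ∈ segment ℝ x y := by rw [h]; exact right_mem_segment ℝ x' y'
  have hx : x ∈ segment ℝ x' y' := by rw [← h]; exact left_mem_segment ℝ x y
  have hy : y ∈ segment ℝ x' y' := by rw [← h]; exact right_mem_segment ℝ x y
  rw [segment_eq_image'] at hx' hy' hx hy
  obtain ⟨s, hs, hsx⟩ := hx'
  obtain ⟨t, ht, hty⟩ := hy'
  obtain ⟨u, hu, hux⟩ := hx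
  obtain ⟨v, hv, hvy⟩ := hy
  simp only [Complex.real_smul] at hsx hty hux hvy
  have hd : y - x ≠ 0 := sub_ne_zero.mpr (Ne.symm hxy)
  have e1 : ((s : ℂ) + u * (t - s)) * (y - x) = 0 := by
    linear_combination (1 - (u:ℂ)) * hsx + (u:ℂ) * hty + hux
  have e2 : ((s : ℂ) + v * (t - s) - 1) * (y - x) = 0 := by
    linear_combination (1 - (v:ℂ)) * hsx + (v:ℂ) * hty + hvy
  have r1 : s + u * (t - s) = 0 := by
    have := (mul_eq_zero.mp e1).resolve_right hd
    exact_mod_cast this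
  have r2 : s + v * (t - s) = 1 := by
    have h0 := (mul_eq_zero.mp e2).resolve_right hd
    have h1 : ((s + v * (t - s) - 1 : ℝ) : ℂ) = 0 := by push_cast; linear_combination h0
    have h2 : (s + v * (t - s) - 1 : ℝ) = 0 := by exact_mod_cast h1
    linarith
  rcases scalar_cases hs ht hu hv r1 r2 with ⟨h1, h2⟩ | ⟨h1, h2⟩
  · subst h1; subst h2
    left
    constructor
    · simpa using hsx
    · rw [← hty]; push_cast; ring
  · subst h1; subst h2
    right
    constructor
    · rw [← hty]; push_cast; ring
    · rw [← hsx]; push_cast; ring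

lemma Pt_ne {i j i' j' : ℕ} (h : i ≠ i' ∨ j ≠ j') : Pt i j ≠ Pt i' j' := by
  intro he
  have := Pt_inj he
  omega

lemma side_unique {e : Set ℂ} {i j i' j' : ℕ} (h1 : IsSideOf e i j) (h2 : IsSideOf e i' j') :
    i = i' ∧ j = j' := by
  rcases h1 with h1 | h1 | h1 <;> rcases h2 with h2 | h2 | h2 <;> rw [h1] at h2 <;>
    rcases seg_eq (Pt_ne (by omega)) h2 with ⟨e1, e2⟩ | ⟨e1, e2⟩ <;>
    (have q1 := Pt_inj e1; have q2 := Pt_inj e2; omega)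

lemma posSeq_zero (s : List (Fin 6)) : posSeq s 0 = 0 := by simp [posSeq]

lemma posSeq_succ (s : List (Fin 6)) (m : ℕ) (h : m < s.length) :
    posSeq s (m + 1) = posSeq s m + dirU (s.getD m 0) := by
  unfold posSeq
  rw [List.take_succ, List.getElem?_eq_getElem h, List.getD_eq_getElem _ _ h,
    List.map_append, List.sum_append]
  simp

/-- The letters of the supplemented word `0·w·0`. -/
def letterSeq (w : List (Fin 6)) : ℕ → Fin 6 :=
  fun m => ((0 : Fin 6) :: (w ++ [0])).getD m 0

lemma letterSeq_zero (w : List (Fin 6)) : letterSeq w 0 = 0 := rfl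

lemma letterSeq_succ (w : List (Fin 6)) (m : ℕ) (hm : m < w.length) :
    letterSeq w (m + 1) = w.getD m 0 := by
  rw [letterSeq, List.getD_cons_succ, List.getD_append _ _ _ _ hm]

lemma letterSeq_last (w : List (Fin 6)) : letterSeq w (w.length + 1) = 0 := by
  rw [letterSeq, List.getD_cons_succ, List.getD_append_right _ _ _ _ (le_refl _)]
  simp

lemma suppPairs_length (w : List (Fin 6)) : (suppPairs w).length = w.length + 1 := by
  simp [suppPairs]

lemma PhiWord_length (w : List (Fin 6)) : (PhiWord w).length = w.length + 1 := by
  simp [PhiWord, suppPairs]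

lemma suppPairs_getElem (w : List (Fin 6)) (m : ℕ) (hm : m < w.length + 1) :
    (suppPairs w)[m]'(by rw [suppPairs_length]; exact hm)
      = (letterSeq w m, letterSeq w (m + 1)) := by
  simp only [suppPairs]
  rw [List.getElem_zip]
  have h1 : letterSeq w m = ((0 : Fin 6) :: (w ++ [0]))[m]'(by simp; omega) :=
    List.getD_eq_getElem _ _ _
  have h2 : letterSeq w (m + 1) = (w ++ [0])[m]'(by simp; omega) := by
    rw [letterSeq, List.getD_cons_succ]
    exact List.getD_eq_getElem _ _ _
  rw [← h1, ← h2]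

lemma PhiWord_getD (w : List (Fin 6)) (m : ℕ) (hm : m < w.length + 1) :
    (PhiWord w).getD m 0 = (phiTable (letterSeq w m) (letterSeq w (m + 1))).getD 0 := by
  simp only [PhiWord]
  rw [List.getD_eq_getElem _ _ (by simpa [suppPairs_length] using hm),
    List.getElem_map, suppPairs_getElem w m hm]

lemma neg_one_ne_Pt (i j : ℕ) : (-1 : ℂ) ≠ Pt i j := by
  intro h
  rw [Pt_eq] at h
  have him := congrArg Complex.im h
  simp at him
  rcases him with him | him
  · have hre := congrArg Complex.re h
    rw [him] at hre
    simp at hre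
    have : (0:ℝ) ≤ (i:ℝ) := by positivity
    rw [← hre] at this
    norm_num at this
  · exact absurd him (ne_of_gt om_im_pos)

lemma Pt_succ_left (i j : ℕ) : Pt (i + 1) j = Pt i j + 1 := by
  rw [Pt_eq, Pt_eq]; push_cast; ring

/-- For every `n ≥ 2` and every W-path `w` of order `n`, `φ` is defined
on all consecutive pairs of the supplemented word `0·w·0` and the resulting word `Φ(w)`
is an S-path of order `n`. -/
theorem phiWord_isSPath (n : ℕ) (hn : 2 ≤ n) (w : List (Fin 6)) (hw : IsWPath n w) :
    (∀ p ∈ suppPairs w, (phiTable p.1 p.2).isSome) ∧ IsSPath n (PhiWord w) := by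
  obtain ⟨⟨hlen, hinj, hrange, hstart, hend⟩, hchain⟩ := hw
  have htri : 3 ≤ triNum n := by
    rw [triNum, Nat.le_div_iff_mul_le (by norm_num)]
    nlinarith
  have hL2 : 2 ≤ w.length := by omega
  have hslen : (PhiWord w).length = w.length + 1 := PhiWord_length w
  -- chain condition, indexed
  have hforb : ∀ m, m < w.length + 1 →
      ¬ ForbiddenTurn (letterSeq w m) (letterSeq w (m + 1)) := by
    replace hchain := List.isChain_iff_getElem.mp hchain
    intro m hm
    have hh := hchain m (by simp; omega)
    have e1 : letterSeq w m = ((0:Fin 6) :: (w ++ [0])).get ⟨m, by simp; omega⟩ := by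
      rw [letterSeq, List.get_eq_getElem]
      exact List.getD_eq_getElem _ _ _
    have e2 : letterSeq w (m+1) = ((0:Fin 6) :: (w ++ [0])).get ⟨m+1, by simp; omega⟩ := by
      rw [letterSeq, List.get_eq_getElem]
      exact List.getD_eq_getElem _ _ _
    rw [e1, e2]
    exact hh
  -- injectivity of the position sequence, indexed by naturals
  have hP : ∀ m1 m2 : ℕ, m1 ≤ w.length → m2 ≤ w.length →
      posSeq w m1 = posSeq w m2 → m1 = m2 := by
    intro m1 m2 h1 h2 he
    have h3 : (⟨m1, by omega⟩ : Fin (w.length + 1)) = ⟨m2, by omega⟩ := hinj he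
    simpa using congrArg Fin.val h3
  -- grid coordinates of the W-path positions
  have hmem : ∀ m : ℕ, m ≤ w.length →
      ∃ i j : ℕ, i + j ≤ n - 1 ∧ posSeq w m = Pt i j := by
    intro m hm
    have hmm : posSeq w m ∈ inscribedGrid n := by
      rw [← hrange]
      exact ⟨⟨m, by omega⟩, rfl⟩
    exact hmm
  choose I J hIJ hPt using hmem
  -- no reversals in the supplemented word
  have hnorev : ∀ m, m < w.length + 1 →
      letterSeq w (m + 1) ≠ letterSeq w m + 3 := by
    intro m hm heq
    rcases Nat.eq_zero_or_pos m with rfl | hm0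
    · have ha1 : letterSeq w 1 = 3 := by
        rw [heq, letterSeq_zero]; decide
      have hp1 : posSeq w 1 = -1 := by
        rw [posSeq_succ w 0 (by omega), posSeq_zero, zero_add,
          ← letterSeq_succ w 0 (by omega), ha1, dirU3]
      exact neg_one_ne_Pt (I 1 (by omega)) (J 1 (by omega))
        (by rw [← hp1]; exact hPt 1 (by omega))
    · by_cases hmL : m = w.length
      · subst hmL
        have haL1 : letterSeq w (w.length + 1) = 0 := letterSeq_last w
        have haL3 : letterSeq w w.length = 3 := by
          have h30 : letterSeq w w.length + 3 = 0 := by rw [← heq, haL1]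
          have hfin : ∀ x : Fin 6, x + 3 = 0 → x = 3 := by decide
          exact hfin _ h30
        have hstep := posSeq_succ w (w.length - 1) (by omega)
        rw [show w.length - 1 + 1 = w.length by omega] at hstep
        have hw1 : w.getD (w.length - 1) 0 = letterSeq w w.length := by
          have h5 := letterSeq_succ w (w.length - 1) (by omega)
          rw [show w.length - 1 + 1 = w.length by omega] at h5
          exact h5.symm
        rw [hw1, haL3, dirU3, hend] at hstep
        have hp : posSeq w (w.length - 1) = Pt n 0 := by
          rw [Pt_eq] at hstep ⊢
          push_cast [Nat.cast_sub (show 1 ≤ n by omega)] at hstep ⊢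
          linear_combination (-1 : ℂ) * hstep
        have h6 := hPt (w.length - 1) (by omega)
        rw [hp] at h6
        have h7 := Pt_inj h6
        have h8 := hIJ (w.length - 1) (by omega)
        omega
      · have hmL' : m < w.length := by omega
        have h1 : posSeq w (m+1) = posSeq w m + dirU (letterSeq w (m+1)) := by
          rw [posSeq_succ w m hmL', ← letterSeq_succ w m hmL']
        have h2 : posSeq w m = posSeq w (m-1) + dirU (letterSeq w m) := by
          have h2a := posSeq_succ w (m-1) (by omega)
          rw [show m - 1 + 1 = m by omega] at h2a
          have h2b := letterSeq_succ w (m-1) (by omega)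
          rw [show m - 1 + 1 = m by omega] at h2b
          rw [h2a, h2b]
        have h3 : posSeq w (m+1) = posSeq w (m-1) := by
          rw [h1, heq, dirU_add3, h2]; ring
        have := hP (m+1) (m-1) (by omega) (by omega) h3
        omega
  -- the table is defined on all consecutive pairs
  have hsome : ∀ m, m < w.length + 1 →
      (phiTable (letterSeq w m) (letterSeq w (m+1))).isSome = true := by
    intro m hm
    rcases phi_cases (letterSeq w m) (letterSeq w (m+1)) with h | h | h
    · exact h
    · exact absurd h (hnorev m hm)
    · exact absurd h (hforb m hm)
  -- the invariant  q_m = p_m + fAux(a_m)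
  have hq : ∀ m, m ≤ w.length →
      posSeq (PhiWord w) m = posSeq w m + fAux (letterSeq w m) := by
    intro m
    induction m with
    | zero =>
      intro _
      rw [posSeq_zero, posSeq_zero, letterSeq_zero, show fAux 0 = 0 from rfl]
      ring
    | succ k ih =>
      intro hk
      have hkL : k < w.length := by omega
      rw [posSeq_succ (PhiWord w) k (by rw [hslen]; omega), ih (by omega),
        PhiWord_getD w k (by omega), phi_step _ _ (hsome k (by omega)),
        posSeq_succ w k hkL, ← letterSeq_succ w k hkL]
      ring
  have hqend : posSeq (PhiWord w) (w.length + 1) = (n : ℂ) := by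
    rw [posSeq_succ (PhiWord w) w.length (by rw [hslen]; omega),
      hq w.length (le_refl _),
      PhiWord_getD w w.length (by omega),
      phi_step _ _ (hsome w.length (by omega)),
      letterSeq_last w, hend, Pt_eq, dirU0, show fAux 0 = 0 from rfl]
    push_cast [Nat.cast_sub (show 1 ≤ n by omega)]
    ring
  -- each edge is a side of the tile based at the corresponding W-path vertex
  have hside : ∀ m : ℕ, (hm : m < w.length + 1) →
      IsSideOf (edgeSeg (PhiWord w) m)
        (I m (Nat.lt_succ_iff.mp hm)) (J m (Nat.lt_succ_iff.mp hm)) := by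
    intro m hm
    have h1 : posSeq (PhiWord w) m
        = Pt (I m (Nat.lt_succ_iff.mp hm)) (J m (Nat.lt_succ_iff.mp hm))
          + fAux (letterSeq w m) := by
      rw [hq m (by omega), hPt m (Nat.lt_succ_iff.mp hm)]
    have h2 : posSeq (PhiWord w) (m+1)
        = Pt (I m (Nat.lt_succ_iff.mp hm)) (J m (Nat.lt_succ_iff.mp hm))
          + fAux (letterSeq w m)
          + dirU ((phiTable (letterSeq w m) (letterSeq w (m+1))).getD 0) := by
      rw [posSeq_succ (PhiWord w) m (by rw [hslen]; omega), PhiWord_getD w m hm, h1]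
    rw [edgeSeg, h1, h2]
    exact phi_side _ _ (hsome m hm) _ _
  constructor
  · -- part 1 : φ is defined on all consecutive pairs
    intro p hp
    obtain ⟨m, hmlt, hme⟩ := List.getElem_of_mem hp
    rw [suppPairs_length] at hmlt
    rw [← hme, suppPairs_getElem w m hmlt]
    exact hsome m hmlt
  · -- part 2 : Φ(w) is an S-path
    have hmle : ∀ m : Fin (PhiWord w).length, (m : ℕ) ≤ w.length := fun m => by
      have := m.isLt; omega
    have hmlt : ∀ m : Fin (PhiWord w).length, (m : ℕ) < w.length + 1 := fun m => by
      have := hmle m; omega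
    refine ⟨by rw [hslen]; omega, posSeq_zero _, ?_, ?_, ?_⟩
    · rw [hslen, hqend, dirU0]; ring
    · intro m m' he
      have s1 := hside m (hmlt m)
      have s2 := hside m' (hmlt m')
      rw [he] at s1
      have hcoord := side_unique s1 s2
      have hpp : posSeq w ↑m = posSeq w ↑m' := by
        rw [hPt ↑m (hmle m), hPt ↑m' (hmle m'), hcoord.1, hcoord.2]
      exact Fin.ext (hP ↑m ↑m' (hmle m) (hmle m') hpp)
    · refine ⟨fun m => ⟨(I m (hmle m), J m (hmle m)), hIJ m (hmle m)⟩, ?_, ?_, ?_⟩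
      · intro m
        exact hside m (hmlt m)
      · intro m m' ht
        have hcoord : I ↑m (hmle m) = I ↑m' (hmle m') ∧ J ↑m (hmle m) = J ↑m' (hmle m') := by
          have := congrArg (fun x => x.val) ht
          simpa [Prod.ext_iff] using this
        have hpp : posSeq w ↑m = posSeq w ↑m' := by
          rw [hPt ↑m (hmle m), hPt ↑m' (hmle m'), hcoord.1, hcoord.2]
        exact Fin.ext (hP ↑m ↑m' (hmle m) (hmle m') hpp)
      · rintro ⟨⟨i, j⟩, hij⟩
        have hmem2 : Pt i j ∈ inscribedGrid n := ⟨i, j, hij, rfl⟩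
        rw [← hrange] at hmem2
        obtain ⟨m0, hm0⟩ := hmem2
        refine ⟨⟨(m0 : ℕ), by rw [hslen]; exact m0.isLt⟩, ?_⟩
        apply Subtype.ext
        have h1 : Pt (I (m0 : ℕ) (by omega)) (J (m0 : ℕ) (by omega)) = Pt i j := by
          rw [← hPt (m0 : ℕ) (by omega)]
          exact hm0
        have h2 := Pt_inj h1
        simp only [Prod.mk.injEq]
        exact ⟨h2.1, h2.2⟩
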